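/- Let $t_0\ge 0$ and let $\Psi:[t_0,\infty)\to[0,\infty)$ be nonincreasing and right-continuous with $\Psi_t\le\Phi_t$ for all $t$, where $\Phi:[t_0,\infty)\to[0,\infty)$ is decreasing, continuously differentiable, $t\mapsto-\dot\Phi_t$ is decreasing, and $\Phi_t/\sqrt{-\dot\Phi_t}\to 0$ as $t\to\infty$. Let $\varphi_s=(-\dot\Phi_s)^{-1/2}$. Then $\int_{t_0}^{\infty}\varphi_s\,d(-\Psi)_s \le \int_{t_0}^{\infty}\sqrt{-\dot\Phi_s}\,ds$, where $d(-\Psi)$ denotes the Lebesgue–Stieltjes measure of $-\Psi$. -/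

import Mathlib

open MeasureTheory Filter

theorem stieltjes_partial_integration_bound
    (t₀ : ℝ) (ht₀ : 0 ≤ t₀) (Ψ Φ Φ' : ℝ → ℝ)
    -- Ψ is nonnegative, nonincreasing and right-continuous on [t₀, ∞)
    (hΨnonneg : ∀ t, t₀ ≤ t → 0 ≤ Ψ t)
    (hΨanti : AntitoneOn Ψ (Set.Ici t₀))
    (hΨrc : ∀ t, t₀ ≤ t → ContinuousWithinAt Ψ (Set.Ici t) t)
    -- Φ is decreasing and continuously differentiable with derivative Φ' < 0
    (hΦ' : ∀ t, t₀ ≤ t → HasDerivAt Φ (Φ' t) t)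
    (hΦ'cont : ContinuousOn Φ' (Set.Ici t₀))
    (hΦ'neg : ∀ t, t₀ ≤ t → Φ' t < 0)
    (hΦnonneg : ∀ t, t₀ ≤ t → 0 ≤ Φ t)
    -- t ↦ -Φ'(t) is decreasing
    (hΦ'anti : AntitoneOn (fun t => -Φ' t) (Set.Ici t₀))
    -- Φ_t / √(-Φ'_t) → 0
    (hratio : Tendsto (fun t => Φ t / Real.sqrt (-Φ' t)) atTop (nhds 0))
    -- domination Ψ ≤ Φ on [t₀, ∞)
    (hΨΦ : ∀ t, t₀ ≤ t → Ψ t ≤ Φ t)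
    -- μ is the Lebesgue–Stieltjes measure of -Ψ on [t₀, ∞)
    (μ : Measure ℝ)
    (hμ : ∀ a b : ℝ, t₀ ≤ a → a ≤ b → μ (Set.Ioc a b) = ENNReal.ofReal (Ψ a - Ψ b)) :
    (∫⁻ s in Set.Ioi t₀, ENNReal.ofReal ((Real.sqrt (-Φ' s))⁻¹) ∂μ) ≤
      ∫⁻ s in Set.Ioi t₀, ENNReal.ofReal (Real.sqrt (-Φ' s)) := by
  classical
  -- globally continuous modification of -Φ'
  set D : ℝ → ℝ := fun u => -Φ' (max u t₀) with hDdef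
  have hmemmax : ∀ u : ℝ, max u t₀ ∈ Set.Ici t₀ := fun u => Set.mem_Ici.2 (le_max_right _ _)
  have hDcont : Continuous D := by
    have hmax : Continuous fun u : ℝ => max u t₀ := continuous_id.max continuous_const
    exact (hΦ'cont.comp_continuous hmax hmemmax).neg
  have hDpos : ∀ u, 0 < D u := fun u => neg_pos.2 (hΦ'neg _ (hmemmax u))
  have hDeq : ∀ u, t₀ ≤ u → D u = -Φ' u := by
    intro u hu; simp only [hDdef, max_eq_left hu]
  have hDanti : ∀ a b, t₀ ≤ a → a ≤ b → D b ≤ D a := by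
    intro a b ha hab
    rw [hDeq a ha, hDeq b (ha.trans hab)]
    exact hΦ'anti ha (ha.trans hab) hab
  -- φ̃ : the increasing integrand
  set φ : ℝ → ℝ := fun u => (Real.sqrt (D u))⁻¹ with hφdef
  have hφcont : Continuous φ := by
    apply Continuous.inv₀ (hDcont.sqrt)
    intro u; exact ne_of_gt (Real.sqrt_pos.2 (hDpos u))
  have hφnonneg : ∀ u, 0 ≤ φ u := fun u => inv_nonneg.2 (Real.sqrt_nonneg _)
  have hφmono : ∀ a b, t₀ ≤ a → a ≤ b → φ a ≤ φ b := by
    intro a b ha hab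
    have h1 : Real.sqrt (D b) ≤ Real.sqrt (D a) := Real.sqrt_le_sqrt (hDanti a b ha hab)
    have h2 : 0 < Real.sqrt (D b) := Real.sqrt_pos.2 (hDpos b)
    exact inv_anti₀ h2 h1
  -- Φ tends to 0 at infinity
  have hΦ0 : Tendsto Φ atTop (nhds 0) := by
    have hb : Tendsto (fun t => Φ t / Real.sqrt (-Φ' t) * Real.sqrt (-Φ' t₀)) atTop (nhds 0) := by
      simpa using hratio.mul_const (Real.sqrt (-Φ' t₀))
    apply squeeze_zero' (f := Φ)
    · filter_upwards [eventually_ge_atTop t₀] with t ht using hΦnonneg t ht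
    · filter_upwards [eventually_ge_atTop t₀] with t ht
      have hs : 0 < Real.sqrt (-Φ' t) := Real.sqrt_pos.2 (neg_pos.2 (hΦ'neg t ht))
      have h1 : Φ t = Φ t / Real.sqrt (-Φ' t) * Real.sqrt (-Φ' t) := by
        field_simp
      have h2 : Real.sqrt (-Φ' t) ≤ Real.sqrt (-Φ' t₀) :=
        Real.sqrt_le_sqrt (hΦ'anti (Set.self_mem_Ici) ht ht)
      have h3 : 0 ≤ Φ t / Real.sqrt (-Φ' t) := div_nonneg (hΦnonneg t ht) hs.le
      calc Φ t = Φ t / Real.sqrt (-Φ' t) * Real.sqrt (-Φ' t) := h1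
        _ ≤ Φ t / Real.sqrt (-Φ' t) * Real.sqrt (-Φ' t₀) := by
            exact mul_le_mul_of_nonneg_left h2 h3
    · exact hb
  -- μ of tails
  have hIoi : ∀ a, t₀ ≤ a → μ (Set.Ioi a) ≤ ENNReal.ofReal (Φ a) := by
    intro a ha
    have hU : Set.Ioi a = ⋃ n : ℕ, Set.Ioc a (a + n) := by
      ext x
      simp only [Set.mem_Ioi, Set.mem_iUnion, Set.mem_Ioc]
      constructor
      · intro hx
        obtain ⟨n, hn⟩ := exists_nat_ge (x - a)
        exact ⟨n, hx, by linarith⟩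
      · rintro ⟨n, h1, _⟩; exact h1
    have hmono : Monotone fun n : ℕ => Set.Ioc a (a + n) := by
      intro m n hmn
      exact Set.Ioc_subset_Ioc_right (by
        have : (m : ℝ) ≤ n := Nat.cast_le.2 hmn
        linarith)
    rw [hU, hmono.measure_iUnion]
    apply iSup_le
    intro n
    have han : a ≤ a + n := le_add_of_nonneg_right n.cast_nonneg
    rw [hμ a (a + n) ha han]
    apply ENNReal.ofReal_le_ofReal
    have h1 := hΨnonneg (a + n) (ha.trans han)
    have h2 := hΨΦ a ha
    linarith
  -- lower bound for tail lintegral of D in terms of Φ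
  have hΦle : ∀ c, t₀ ≤ c →
      ENNReal.ofReal (Φ c) ≤ ∫⁻ u in Set.Ioi c, ENNReal.ofReal (D u) := by
    intro c hc
    have key : ∀ n : ℕ, ENNReal.ofReal (Φ c - Φ (c + n)) ≤
        ∫⁻ u in Set.Ioi c, ENNReal.ofReal (D u) := by
      intro n
      have hcn : c ≤ c + n := le_add_of_nonneg_right n.cast_nonneg
      have hsub : Set.uIcc c (c + n) ⊆ Set.Ici t₀ := by
        rw [Set.uIcc_of_le hcn]
        intro x hx
        exact hc.trans hx.1
      have hderiv : ∀ x ∈ Set.uIcc c (c + n), HasDerivAt (fun t => -Φ t) (D x) x := by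
        intro x hx
        have hxt : t₀ ≤ x := hsub hx
        rw [hDeq x hxt]
        exact (hΦ' x hxt).neg
      have hint : IntervalIntegrable D MeasureTheory.volume c (c + n) :=
        hDcont.intervalIntegrable _ _
      have hFTC : ∫ u in c..(c + n), D u = Φ c - Φ (c + n) := by
        rw [intervalIntegral.integral_eq_sub_of_hasDerivAt hderiv hint]
        ring
      have hIoc : ∫ u in Set.Ioc c (c + n), D u = Φ c - Φ (c + n) := by
        rw [← intervalIntegral.integral_of_le hcn, hFTC]
      have hIntOn : IntegrableOn D (Set.Ioc c (c + n)) := by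
        apply (hDcont.integrableOn_Icc (a := c) (b := c + n)).mono_set Set.Ioc_subset_Icc_self
      calc ENNReal.ofReal (Φ c - Φ (c + n))
          = ENNReal.ofReal (∫ u in Set.Ioc c (c + n), D u) := by rw [hIoc]
        _ = ∫⁻ u in Set.Ioc c (c + n), ENNReal.ofReal (D u) :=
            ofReal_integral_eq_lintegral_ofReal hIntOn
              (Filter.Eventually.of_forall fun x => (hDpos x).le)
        _ ≤ ∫⁻ u in Set.Ioi c, ENNReal.ofReal (D u) :=
            lintegral_mono_set Set.Ioc_subset_Ioi_self
    have hlim : Tendsto (fun n : ℕ => ENNReal.ofReal (Φ c - Φ (c + n))) atTop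
        (nhds (ENNReal.ofReal (Φ c))) := by
      have h1 : Tendsto (fun n : ℕ => c + (n : ℝ)) atTop atTop :=
        tendsto_atTop_add_const_left _ c tendsto_natCast_atTop_atTop
      have h2 : Tendsto (fun n : ℕ => Φ c - Φ (c + n)) atTop (nhds (Φ c - 0)) :=
        tendsto_const_nhds.sub (hΦ0.comp h1)
      rw [sub_zero] at h2
      exact (ENNReal.continuous_ofReal.tendsto _).comp h2
    exact le_of_tendsto' hlim key
  -- main superlevel-set estimate
  have claim1 : ∀ l : ℝ, μ ({s | l < φ s} ∩ Set.Ioi t₀) ≤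
      ∫⁻ u in Set.Ioi t₀, (if l < φ u then ENNReal.ofReal (D u) else 0) := by
    intro l
    set A := {s | l < φ s} ∩ Set.Ioi t₀ with hAdef
    by_cases hA : A = ∅
    · simp [hA]
    · have hAne : A.Nonempty := Set.nonempty_iff_ne_empty.2 hA
      have hAbdd : BddBelow A := ⟨t₀, fun x hx => (hx.2 : t₀ < x).le⟩
      set c := sInf A with hcdef
      have hct₀ : t₀ ≤ c := le_csInf hAne fun x hx => (hx.2 : t₀ < x).le
      -- step a : μ A ≤ ofReal (Φ c)
      have stepa : μ A ≤ ENNReal.ofReal (Φ c) := by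
        set e : ℕ → ℝ := fun n => max t₀ (c - 1 / (n + 1)) with hedef
        have het₀ : ∀ n, t₀ ≤ e n := fun n => le_max_left _ _
        have hsubset : ∀ n, A ⊆ Set.Ioi (e n) := by
          intro n x hx
          have h1 : t₀ < x := hx.2
          have h2 : c ≤ x := csInf_le hAbdd hx
          have h3 : (0 : ℝ) < 1 / (n + 1) := by positivity
          simp only [Set.mem_Ioi, hedef, max_lt_iff]
          exact ⟨h1, by linarith⟩
        have hbound : ∀ n, μ A ≤ ENNReal.ofReal (Φ (e n)) := fun n =>
          (measure_mono (hsubset n)).trans (hIoi (e n) (het₀ n))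
        have hetends : Tendsto e atTop (nhds c) := by
          have h1 : Tendsto (fun n : ℕ => c - 1 / (n + 1)) atTop (nhds (c - 0)) :=
            tendsto_const_nhds.sub tendsto_one_div_add_atTop_nhds_zero_nat
          rw [sub_zero] at h1
          have h2 : Tendsto (fun n : ℕ => max t₀ (c - 1 / (n + 1))) atTop
              (nhds (max t₀ c)) := (continuous_const.max continuous_id).continuousAt.tendsto.comp h1
          rwa [max_eq_right hct₀] at h2
        have hΦc : Tendsto (fun n => ENNReal.ofReal (Φ (e n))) atTop
            (nhds (ENNReal.ofReal (Φ c))) := by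
          have hΦcont : ContinuousAt Φ c := (hΦ' c hct₀).continuousAt
          exact (ENNReal.continuous_ofReal.tendsto _).comp (hΦcont.tendsto.comp hetends)
        exact ge_of_tendsto' hΦc hbound
      -- step c : the tail integral of D over Ioi c is below the indicator integral
      have stepc : (∫⁻ u in Set.Ioi c, ENNReal.ofReal (D u)) ≤
          ∫⁻ u in Set.Ioi t₀, (if l < φ u then ENNReal.ofReal (D u) else 0) := by
        have hcongr : ∫⁻ u in Set.Ioi c, ENNReal.ofReal (D u) =
            ∫⁻ u in Set.Ioi c, (if l < φ u then ENNReal.ofReal (D u) else 0) := by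
          apply setLIntegral_congr_fun measurableSet_Ioi
          intro u hu
          have hcu : c < u := hu
          obtain ⟨s, hsA, hsu⟩ := (csInf_lt_iff hAbdd hAne).1 hcu
          have h1 : l < φ s := hsA.1
          have h2 : t₀ < s := hsA.2
          have h3 : φ s ≤ φ u := hφmono s u h2.le hsu.le
          simp only [if_pos (h1.trans_le h3)]
        rw [hcongr]
        exact lintegral_mono_set fun x hx => lt_of_le_of_lt hct₀ hx
      calc μ A ≤ ENNReal.ofReal (Φ c) := stepa
        _ ≤ ∫⁻ u in Set.Ioi c, ENNReal.ofReal (D u) := hΦle c hct₀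
        _ ≤ _ := stepc
  -- compute/estimate the inner λ-integral
  have inner_le : ∀ u, t₀ < u →
      (∫⁻ l in Set.Ioi (0 : ℝ), (if l < φ u then ENNReal.ofReal (D u) else 0)) ≤
        ENNReal.ofReal (Real.sqrt (D u)) := by
    intro u _
    have h1 : (fun l : ℝ => (if l < φ u then ENNReal.ofReal (D u) else 0)) =
        (Set.Iio (φ u)).indicator fun _ => ENNReal.ofReal (D u) := by
      ext l
      simp [Set.indicator_apply, Set.mem_Iio]
    rw [h1, lintegral_indicator measurableSet_Iio]
    rw [setLIntegral_const, Measure.restrict_apply measurableSet_Iio]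
    have h2 : Set.Iio (φ u) ∩ Set.Ioi (0 : ℝ) = Set.Ioo 0 (φ u) := Set.Iio_inter_Ioi
    rw [h2, Real.volume_Ioo, sub_zero]
    rw [← ENNReal.ofReal_mul (hDpos u).le]
    apply le_of_eq
    congr 1
    have hs : Real.sqrt (D u) ≠ 0 := ne_of_gt (Real.sqrt_pos.2 (hDpos u))
    rw [hφdef]
    rw [← Real.mul_self_sqrt (hDpos u).le]
    field_simp
    rw [Real.sqrt_sq (Real.sqrt_nonneg _)]
  -- measurability of the two-variable integrand
  have hFmeas : Measurable (Function.uncurry fun l u =>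
      (if l < φ u then ENNReal.ofReal (D u) else 0)) := by
    have hopen : IsOpen {p : ℝ × ℝ | p.1 < φ p.2} :=
      isOpen_lt continuous_fst (hφcont.comp continuous_snd)
    exact Measurable.ite hopen.measurableSet
      ((ENNReal.continuous_ofReal.comp (hDcont.comp continuous_snd)).measurable)
      measurable_const
  -- final chain
  calc (∫⁻ s in Set.Ioi t₀, ENNReal.ofReal ((Real.sqrt (-Φ' s))⁻¹) ∂μ)
      = ∫⁻ s in Set.Ioi t₀, ENNReal.ofReal (φ s) ∂μ := by
        apply setLIntegral_congr_fun measurableSet_Ioi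
        intro s hs
        rw [hφdef]
        simp only [hDeq s (le_of_lt hs)]
    _ = ∫⁻ l in Set.Ioi (0 : ℝ), (μ.restrict (Set.Ioi t₀)) {s | l < φ s} := by
        exact lintegral_eq_lintegral_meas_lt (μ.restrict (Set.Ioi t₀))
          (ae_of_all _ hφnonneg) hφcont.measurable.aemeasurable
    _ ≤ ∫⁻ l in Set.Ioi (0 : ℝ),
          ∫⁻ u in Set.Ioi t₀, (if l < φ u then ENNReal.ofReal (D u) else 0) := by
        apply lintegral_mono
        intro l
        calc (μ.restrict (Set.Ioi t₀)) {s | l < φ s}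
            = μ ({s | l < φ s} ∩ Set.Ioi t₀) := Measure.restrict_apply' measurableSet_Ioi
          _ ≤ _ := claim1 l
    _ = ∫⁻ u in Set.Ioi t₀,
          ∫⁻ l in Set.Ioi (0 : ℝ), (if l < φ u then ENNReal.ofReal (D u) else 0) := by
        exact lintegral_lintegral_swap hFmeas.aemeasurable
    _ ≤ ∫⁻ u in Set.Ioi t₀, ENNReal.ofReal (Real.sqrt (D u)) := by
        apply setLIntegral_mono_ae
        · exact (ENNReal.continuous_ofReal.comp (hDcont.sqrt)).measurable.aemeasurable
        · exact ae_of_all _ fun u hu => inner_le u hu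
    _ = ∫⁻ s in Set.Ioi t₀, ENNReal.ofReal (Real.sqrt (-Φ' s)) := by
        apply setLIntegral_congr_fun measurableSet_Ioi
        intro s hs
        simp only [hDeq s (le_of_lt hs)]
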